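/- For every r > 0, the mixture over u uniform on [0,1] of the probability measures on (0, ∞) with densities f_{ru} equals the probability measure with density p_r; i.e., denoting by μ_a the measure on (0, ∞) with Lebesgue density f_a(t) = (|a|/√(2πt³))·exp(−a²/(2t)), the measure ∫₀¹ μ_{ru} du (the bind of Lebesgue measure restricted to [0,1] with the kernel u ↦ μ_{ru}) equals the measure on (0, ∞) with Lebesgue density p_r(t) = (1/(r·√(2πt)))·(1 − exp(−r²/(2t))). -/

import Mathlib

open MeasureTheory Real

lemma key_integral (r t : ℝ) (hr : 0 < r) (ht : 0 < t) :
    ∫ u in Set.Icc (0:ℝ) 1,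
      |r * u| / Real.sqrt (2 * Real.pi * t ^ 3) * Real.exp (-(r*u) ^ 2 / (2 * t))
    = 1 / (r * Real.sqrt (2 * Real.pi * t)) * (1 - Real.exp (-r ^ 2 / (2 * t))) := by
  have hs : (0:ℝ) < Real.sqrt (2 * Real.pi * t ^ 3) :=
    Real.sqrt_pos.2 (by positivity)
  have h1 : ∫ u in Set.Icc (0:ℝ) 1,
      |r * u| / Real.sqrt (2 * Real.pi * t ^ 3) * Real.exp (-(r*u) ^ 2 / (2 * t))
      = ∫ u in (0:ℝ)..1,
      r * u / Real.sqrt (2 * Real.pi * t ^ 3) * Real.exp (-(r*u) ^ 2 / (2 * t)) := by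
    rw [MeasureTheory.integral_Icc_eq_integral_Ioc, ← intervalIntegral.integral_of_le zero_le_one]
    apply intervalIntegral.integral_congr
    intro u hu
    rw [Set.uIcc_of_le zero_le_one] at hu
    simp only [abs_of_nonneg (mul_nonneg hr.le hu.1)]
  rw [h1]
  set c := Real.sqrt (2 * Real.pi * t ^ 3) with hc
  have hderiv : ∀ u ∈ Set.uIcc (0:ℝ) 1,
      HasDerivAt (fun u => -(t / (r * c)) * Real.exp (-(r*u) ^ 2 / (2 * t)))
        (r * u / c * Real.exp (-(r*u) ^ 2 / (2 * t))) u := by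
    intro u _
    have ha : HasDerivAt (fun u : ℝ => r * u) r u := by
      simpa using (hasDerivAt_id u).const_mul r
    have hb : HasDerivAt (fun u : ℝ => -(r*u) ^ 2 / (2 * t))
        (-(2 * (r*u) * r) / (2 * t)) u := by
      simpa using ((ha.pow 2).neg.div_const (2 * t))
    have hexp := hb.exp
    have := hexp.const_mul (-(t / (r * c)))
    refine this.congr_deriv ?_
    have hr0 : r ≠ 0 := hr.ne'
    have ht0 : t ≠ 0 := ht.ne'
    have hc0 : c ≠ 0 := hs.ne'
    field_simp
  have := intervalIntegral.integral_eq_sub_of_hasDerivAt hderiv ?_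
  · rw [this]
    have hsqrt : c = Real.sqrt (2 * Real.pi * t) * t := by
      rw [hc]
      rw [show 2 * Real.pi * t ^ 3 = (2 * Real.pi * t) * t ^ 2 by ring,
        Real.sqrt_mul (by positivity), Real.sqrt_sq ht.le]
    rw [hsqrt, show -(r * (0:ℝ)) ^ 2 / (2 * t) = 0 by ring,
      show -(r * (1:ℝ)) ^ 2 / (2 * t) = -r ^ 2 / (2 * t) by ring, Real.exp_zero]
    field_simp
    ring
  · apply ContinuousOn.intervalIntegrable
    fun_prop

lemma key_lintegral (r t : ℝ) (hr : 0 < r) (ht : 0 < t) :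
    ∫⁻ u in Set.Icc (0:ℝ) 1,
      ENNReal.ofReal (|r * u| / Real.sqrt (2 * Real.pi * t ^ 3) * Real.exp (-(r*u) ^ 2 / (2 * t)))
    = ENNReal.ofReal (1 / (r * Real.sqrt (2 * Real.pi * t)) * (1 - Real.exp (-r ^ 2 / (2 * t)))) := by
  rw [← key_integral r t hr ht, ← ofReal_integral_eq_lintegral_ofReal]
  · apply Continuous.integrableOn_Icc
    fun_prop
  · filter_upwards with u
    positivity

/-- The measure `μ_a` on `(0, ∞)` with Lebesgue density
`f_a(t) = (|a|/√(2πt³)) exp(−a²/(2t))` (the law of the first hitting time of level `a` by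
standard Brownian motion started at `0`). -/
noncomputable def firstPassageMeasure (a : ℝ) : Measure ℝ :=
  (volume.restrict (Set.Ioi (0 : ℝ))).withDensity
    (fun t => ENNReal.ofReal (|a| / Real.sqrt (2 * Real.pi * t ^ 3) * Real.exp (-a ^ 2 / (2 * t))))

/-- The measure on `(0, ∞)` with Lebesgue density
`p_r(t) = (1/(r√(2πt))) (1 − exp(−r²/(2t)))` (the law of the time at which the BES(3) process
started at `r > 0` attains its ultimate minimum). -/
noncomputable def ultimateMinimumTimeMeasure (r : ℝ) : Measure ℝ :=
  (volume.restrict (Set.Ioi (0 : ℝ))).withDensity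
    (fun t => ENNReal.ofReal
      (1 / (r * Real.sqrt (2 * Real.pi * t)) * (1 - Real.exp (-r ^ 2 / (2 * t)))))

/-- The mixture over `u` uniform on `[0,1]` of the first-passage laws `μ_{ru}` equals the law
with density `p_r`: `∫₀¹ μ_{ru} du = p_r(t) dt` (formula (2) combined with (d) of the paper). -/
theorem uniform_mixture_firstPassageMeasure (r : ℝ) (hr : 0 < r) :
    (volume.restrict (Set.Icc (0 : ℝ) 1)).bind (fun u => firstPassageMeasure (r * u))
      = ultimateMinimumTimeMeasure r := by
  have hmg : Measurable (fun p : ℝ × ℝ => ENNReal.ofReal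
      (|r * p.1| / Real.sqrt (2 * Real.pi * p.2 ^ 3) * Real.exp (-(r * p.1) ^ 2 / (2 * p.2)))) := by
    fun_prop
  have hker : Measurable (fun u => firstPassageMeasure (r * u)) := by
    apply Measure.measurable_of_measurable_coe
    intro s hs
    simp only [firstPassageMeasure, withDensity_apply _ hs]
    exact Measurable.lintegral_prod_right hmg
  ext s hs
  rw [Measure.bind_apply hs hker.aemeasurable]
  simp only [firstPassageMeasure, withDensity_apply _ hs]
  rw [ultimateMinimumTimeMeasure, withDensity_apply _ hs]
  have hswap := lintegral_lintegral_swap (μ := volume.restrict (Set.Icc (0:ℝ) 1))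
    (ν := (volume.restrict (Set.Ioi (0:ℝ))).restrict s)
    (f := fun u t => ENNReal.ofReal
      (|r * u| / Real.sqrt (2 * Real.pi * t ^ 3) * Real.exp (-(r * u) ^ 2 / (2 * t))))
    hmg.aemeasurable
  rw [hswap]
  apply lintegral_congr_ae
  have : ∀ᵐ t ∂((volume.restrict (Set.Ioi (0:ℝ))).restrict s), t ∈ Set.Ioi (0:ℝ) := by
    apply ae_restrict_of_ae
    exact ae_restrict_mem measurableSet_Ioi
  filter_upwards [this] with t ht
  exact key_lintegral r t hr ht
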